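/- In any information frame, each local entailment relation is interpolative: for all i ∈ A and finite X, Y ⊆ A with X ∈ Con_i and X ⊢_i Y, there exists Z ∈ Con_i with X ⊢_i Z and Z ⊢_i Y. -/
import Mathlib

/-- The data `(Con, Ent)` on token set `A` forms an information frame.
`Con i` is the set of finite sets of tokens consistent with `i`, and
`Ent i X a` means `X ⊢ᵢ a`.  The accessibility relation is `i R j ↔ {i} ∈ Con j`. -/
structure IsInfoFrame {A : Type*} [DecidableEq A]
    (Con : A → Set (Finset A)) (Ent : A → Finset A → A → Prop) : Prop where
  self_con : ∀ i : A, ({i} : Finset A) ∈ Con i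
  con_down : ∀ (i : A) (X Y : Finset A), Y ⊆ X → X ∈ Con i → Y ∈ Con i
  sound : ∀ (i : A) (X Y : Finset A), X ∈ Con i → (∀ b ∈ Y, Ent i X b) → Y ∈ Con i
  weaken : ∀ (i : A) (X Y : Finset A) (a : A),
    X ∈ Con i → Y ∈ Con i → X ⊆ Y → Ent i X a → Ent i Y a
  cut : ∀ (i : A) (X Y : Finset A) (a : A),
    X ∈ Con i → (∀ b ∈ Y, Ent i X b) → Ent i Y a → Ent i X a
  con_transfer : ∀ i j : A, ({i} : Finset A) ∈ Con j → Con i ⊆ Con j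
  ent_transfer : ∀ (i j : A) (X : Finset A) (a : A),
    ({i} : Finset A) ∈ Con j → X ∈ Con i → Ent i X a → Ent j X a
  interp : ∀ (i : A) (X Y : Finset A), X ∈ Con i → (∀ b ∈ Y, Ent i X b) →
    ∃ (e : A) (Z : Finset A), Z ∈ Con e ∧ (∀ b ∈ insert e Z, Ent i X b) ∧
      (∀ b ∈ Y, Ent e Z b)

/-- Finite consistency of a subset `x` of tokens. -/
def FinConsistent {A : Type*} (Con : A → Set (Finset A)) (x : Set A) : Prop :=
  ∀ F : Finset A, ↑F ⊆ x → ∃ i ∈ x, F ∈ Con i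

/-- Closure of `x` under entailment. -/
def EntClosed {A : Type*} (Con : A → Set (Finset A))
    (Ent : A → Finset A → A → Prop) (x : Set A) : Prop :=
  ∀ i ∈ x, ∀ X : Finset A, ↑X ⊆ x → X ∈ Con i → ∀ a : A, Ent i X a → a ∈ x

/-- Completeness of `x`. -/
def EntComplete {A : Type*} (Con : A → Set (Finset A))
    (Ent : A → Finset A → A → Prop) (x : Set A) : Prop :=
  ∀ a ∈ x, ∃ i ∈ x, ∃ X : Finset A, ↑X ⊆ x ∧ X ∈ Con i ∧ Ent i X a

/-- A (global) state of an information frame. -/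
def IsState {A : Type*} (Con : A → Set (Finset A))
    (Ent : A → Finset A → A → Prop) (x : Set A) : Prop :=
  FinConsistent Con x ∧ EntClosed Con Ent x ∧ EntComplete Con Ent x

theorem stmt7 {A : Type*} [DecidableEq A] (Con : A → Set (Finset A))
    (Ent : A → Finset A → A → Prop) (hF : IsInfoFrame Con Ent)
    (i : A) (X Y : Finset A) (hX : X ∈ Con i) (h : ∀ b ∈ Y, Ent i X b) :
    ∃ Z : Finset A, Z ∈ Con i ∧ (∀ b ∈ Z, Ent i X b) ∧ (∀ b ∈ Y, Ent i Z b) := by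
  obtain ⟨e, Z, hZe, hXZ, hZY⟩ := hF.interp i X Y hX h
  have hins : insert e Z ∈ Con i := hF.sound i X (insert e Z) hX hXZ
  have hei : ({e} : Finset A) ∈ Con i :=
    hF.con_down i (insert e Z) {e} (by simp) hins
  refine ⟨Z, hF.con_transfer e i hei hZe, ?_, ?_⟩
  · exact fun b hb => hXZ b (Finset.mem_insert_of_mem hb)
  · exact fun b hb => hF.ent_transfer e i Z b hei hZe (hZY b hb)
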